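/- Let 0 < α < β ≤ 1 and p₁, p₂ > 0 with p₁ + p₂ = 1. Then there exists a constant C > 0 such that for every n ≥ 1, every ω ∈ [0,1], and all x, y in the interior of J_n(ω): the map T_ω^n is differentiable at x and at y with strictly positive derivatives, and |log((T_ω^n)'(x)) − log((T_ω^n)'(y))| ≤ C·|T_ω^n(x) − T_ω^n(y)| ≤ C. -/

import Mathlib

noncomputable section

open Real MeasureTheory Set Filter

/-- The LSV map `T_γ` on `[0,1]`: `x(1+2^γ x^γ)` on `[0,1/2]`, `2x-1` on `(1/2,1]`. -/
noncomputable def lsv (γ : ℝ) (x : ℝ) : ℝ :=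
  if x ≤ 1 / 2 then x * (1 + 2 ^ γ * x ^ γ) else 2 * x - 1

/-- The left branch of the LSV map. -/
noncomputable def lsvLeft (γ : ℝ) (x : ℝ) : ℝ := x * (1 + 2 ^ γ * x ^ γ)

/-- The random parameter selection: `α` for `ω ∈ [0,p₁)`, `β` for `ω ∈ [p₁,1]`. -/
noncomputable def sel (α β p₁ : ℝ) (ω : ℝ) : ℝ := if ω < p₁ then α else β

/-- The randomizing map `φ` on `[0,1]`. -/
noncomputable def phiMap (p₁ p₂ : ℝ) (ω : ℝ) : ℝ :=
  if ω < p₁ then ω / p₁ else (ω - p₁) / p₂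

/-- The skew product `S(x,ω) = (T_{α(ω)}(x), φ(ω))`. -/
noncomputable def skew (α β p₁ p₂ : ℝ) (z : ℝ × ℝ) : ℝ × ℝ :=
  (lsv (sel α β p₁ z.2) z.1, phiMap p₁ p₂ z.2)

/-- Random iterates: `randIter n ω = T_ω^n = T_{α(φ^{n-1}ω)} ∘ ⋯ ∘ T_{α(ω)}`. -/
noncomputable def randIter (α β p₁ p₂ : ℝ) : ℕ → ℝ → ℝ → ℝ
  | 0, _, x => x
  | n + 1, ω, x => randIter α β p₁ p₂ n (phiMap p₁ p₂ ω) (lsv (sel α β p₁ ω) x)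

/-- The deterministic backward orbit `x_n^γ`: `x₀^γ = 1`, `x₁^γ = 1/2`, and for `n ≥ 2`,
`x_n^γ` is the (unique) point of `(0,1/2]` with `T_γ(x_n^γ) = x_{n-1}^γ`. -/
def IsDetBackOrbit (γ : ℝ) (x : ℕ → ℝ) : Prop :=
  x 0 = 1 ∧ x 1 = 1 / 2 ∧
    ∀ n, 2 ≤ n → x n ∈ Set.Ioc (0 : ℝ) (1 / 2) ∧ lsv γ (x n) = x (n - 1)

/-- The random backward orbit `x_n(ω)`: `x₀(ω) = 1`, `x₁(ω) = 1/2`, and for `n ≥ 2`,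
`x_n(ω)` is the (unique) point of `(0,1/2]` with `T_{α(ω)}(x_n(ω)) = x_{n-1}(φω)`. -/
def IsRandBackOrbit (α β p₁ p₂ : ℝ) (X : ℕ → ℝ → ℝ) : Prop :=
  (∀ ω, X 0 ω = 1) ∧ (∀ ω, X 1 ω = 1 / 2) ∧
    ∀ n, 2 ≤ n → ∀ ω, X n ω ∈ Set.Ioc (0 : ℝ) (1 / 2) ∧
      lsv (sel α β p₁ ω) (X n ω) = X (n - 1) (phiMap p₁ p₂ ω)

/-- The points `x'_n(ω)`: `x'₀(ω) = 1`, `x'₁(ω) = 3/4`, and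
`x'_n(ω) = (x_n(φω) + 1)/2` for `n ≥ 2`. -/
def IsRandBackOrbitPrime (p₁ p₂ : ℝ) (X X' : ℕ → ℝ → ℝ) : Prop :=
  (∀ ω, X' 0 ω = 1) ∧ (∀ ω, X' 1 ω = 3 / 4) ∧
    ∀ n, 2 ≤ n → ∀ ω, X' n ω = (X n (phiMap p₁ p₂ ω) + 1) / 2

/-- First return time of `(x,ω)` to `(1/2,1] × [0,1]` under the skew product. -/
noncomputable def returnTime (α β p₁ p₂ : ℝ) (x ω : ℝ) : ℕ :=
  sInf {k : ℕ | 1 ≤ k ∧ 1 / 2 < randIter α β p₁ p₂ k ω x}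

/-- derivative of the left branch -/
noncomputable def dfun (γ : ℝ) (x : ℝ) : ℝ := 1 + 2 ^ γ * (1 + γ) * x ^ γ


section Basic

lemma two_rpow_pos {γ : ℝ} : (0:ℝ) < 2 ^ γ := Real.rpow_pos_of_pos two_pos γ

lemma two_rpow_le_two {γ : ℝ} (hγ1 : γ ≤ 1) : (2:ℝ) ^ γ ≤ 2 := by
  calc (2:ℝ) ^ γ ≤ 2 ^ (1:ℝ) := by
        apply Real.rpow_le_rpow_of_exponent_le (by norm_num) hγ1
    _ = 2 := by norm_num

lemma one_le_two_rpow {γ : ℝ} (hγ0 : 0 ≤ γ) : (1:ℝ) ≤ 2 ^ γ :=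
  Real.one_le_rpow (by norm_num) hγ0

lemma lsv_eq_left {γ x : ℝ} (hx : x ≤ 1/2) : lsv γ x = lsvLeft γ x := by
  simp only [lsv, lsvLeft, if_pos hx]

lemma lsv_eq_right {γ x : ℝ} (hx : ¬ (x ≤ 1/2)) : lsv γ x = 2 * x - 1 := by
  simp only [lsv, if_neg hx]

lemma lsvLeft_pos {γ x : ℝ} (hx : 0 < x) : 0 < lsvLeft γ x := by
  have h2 : (0:ℝ) < 2 ^ γ := two_rpow_pos
  have h3 : (0:ℝ) ≤ x ^ γ := Real.rpow_nonneg hx.le γ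
  have : (0:ℝ) < 1 + 2 ^ γ * x ^ γ := by nlinarith
  exact mul_pos hx this

lemma lsvLeft_half {γ : ℝ} : lsvLeft γ (1/2) = 1 := by
  have h : (2:ℝ) ^ γ * (1/2 : ℝ) ^ γ = 1 := by
    rw [← Real.mul_rpow (by norm_num) (by norm_num)]
    norm_num
  unfold lsvLeft
  rw [h]; norm_num

lemma self_le_lsvLeft {γ x : ℝ} (hx : 0 ≤ x) : x ≤ lsvLeft γ x := by
  have h2 : (0:ℝ) < 2 ^ γ := two_rpow_pos
  have h3 : (0:ℝ) ≤ x ^ γ := Real.rpow_nonneg hx γ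
  have h4 : (0:ℝ) ≤ x * (2 ^ γ * x ^ γ) := mul_nonneg hx (mul_nonneg h2.le h3)
  calc x = x * 1 := (mul_one x).symm
    _ ≤ x * (1 + 2 ^ γ * x ^ γ) := by nlinarith
    _ = lsvLeft γ x := rfl

lemma lsvLeft_strictMonoOn {γ : ℝ} (hγ0 : 0 ≤ γ) :
    StrictMonoOn (lsvLeft γ) (Set.Ici (0:ℝ)) := by
  intro a ha b hb hab
  simp only [Set.mem_Ici] at ha hb
  have h2 : (0:ℝ) < 2 ^ γ := two_rpow_pos
  have hr : a ^ γ ≤ b ^ γ := Real.rpow_le_rpow ha hab.le hγ0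
  have hbγ : (0:ℝ) ≤ b ^ γ := Real.rpow_nonneg hb γ
  have h1 : a * (1 + 2 ^ γ * a ^ γ) ≤ a * (1 + 2 ^ γ * b ^ γ) := by
    apply mul_le_mul_of_nonneg_left _ ha
    nlinarith
  have h2' : a * (1 + 2 ^ γ * b ^ γ) < b * (1 + 2 ^ γ * b ^ γ) := by
    apply mul_lt_mul_of_pos_right hab
    nlinarith
  calc lsvLeft γ a = a * (1 + 2 ^ γ * a ^ γ) := rfl
    _ ≤ a * (1 + 2 ^ γ * b ^ γ) := h1
    _ < b * (1 + 2 ^ γ * b ^ γ) := h2'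
    _ = lsvLeft γ b := rfl

lemma lsvLeft_monotone {γ a b : ℝ} (hγ0 : 0 ≤ γ) (ha : 0 ≤ a) (hab : a ≤ b) :
    lsvLeft γ a ≤ lsvLeft γ b := by
  rcases eq_or_lt_of_le hab with rfl | h
  · exact le_rfl
  · exact (lsvLeft_strictMonoOn hγ0 ha (by simp only [Set.mem_Ici]; linarith) h).le

lemma lsvLeft_lt_reflect {γ a b : ℝ} (hγ0 : 0 ≤ γ) (hb : 0 ≤ b)
    (h : lsvLeft γ a < lsvLeft γ b) : a < b := by
  by_contra hc
  push_neg at hc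
  exact absurd (lsvLeft_monotone hγ0 hb hc) (not_le.mpr h)

lemma lsvLeft_le_reflect {γ a b : ℝ} (hγ0 : 0 ≤ γ) (ha : 0 ≤ a) (hb : 0 ≤ b)
    (h : lsvLeft γ a ≤ lsvLeft γ b) : a ≤ b := by
  by_contra hc
  push_neg at hc
  exact absurd (lsvLeft_strictMonoOn hγ0 hb ha hc) (not_lt.mpr h)

lemma lsvLeft_le_two_mul {γ x : ℝ} (hγ0 : 0 ≤ γ) (hx : 0 ≤ x) (hx2 : x ≤ 1/2) :
    lsvLeft γ x ≤ 2 * x := by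
  have h1 : (2:ℝ) ^ γ * x ^ γ = (2*x) ^ γ := by
    rw [← Real.mul_rpow (by norm_num) hx]
  have h2 : (2*x : ℝ) ^ γ ≤ 1 := by
    apply Real.rpow_le_one (by linarith) (by linarith) hγ0
  calc lsvLeft γ x = x * (1 + (2*x)^γ) := by rw [lsvLeft, h1]
    _ ≤ x * 2 := by nlinarith
    _ = 2 * x := by ring

lemma two_mul_lsvLeft_le {γ x : ℝ} (hγ0 : 0 ≤ γ) (hx : 0 ≤ x) :
    2 * lsvLeft γ x ≤ lsvLeft γ (2 * x) := by
  have hr : x ^ γ ≤ (2*x) ^ γ := Real.rpow_le_rpow hx (by linarith) hγ0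
  have h2 : (0:ℝ) < 2 ^ γ := two_rpow_pos
  simp only [lsvLeft]
  nlinarith [mul_nonneg hx (mul_nonneg h2.le (Real.rpow_nonneg hx γ)),
    mul_le_mul_of_nonneg_left hr h2.le, mul_nonneg hx (sub_nonneg.mpr (mul_le_mul_of_nonneg_left hr h2.le))]

end Basic

section Calc2

variable {γ u v x a b : ℝ}

lemma dfun_ge_one (hγ0 : 0 ≤ γ) (hx : 0 ≤ x) : 1 ≤ dfun γ x := by
  have h2 : (0:ℝ) < 2 ^ γ := Real.rpow_pos_of_pos two_pos γ
  have h3 : (0:ℝ) ≤ x ^ γ := Real.rpow_nonneg hx γ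
  unfold dfun
  nlinarith [mul_nonneg (mul_nonneg h2.le (by linarith : (0:ℝ) ≤ 1+γ)) h3]

lemma dfun_monotone (hγ0 : 0 ≤ γ) (hu : 0 ≤ u) (huv : u ≤ v) :
    dfun γ u ≤ dfun γ v := by
  have h2 : (0:ℝ) < 2 ^ γ := Real.rpow_pos_of_pos two_pos γ
  have hr : u ^ γ ≤ v ^ γ := Real.rpow_le_rpow hu huv hγ0
  unfold dfun
  have := mul_le_mul_of_nonneg_left hr (mul_nonneg h2.le (by linarith : (0:ℝ) ≤ 1+γ))
  nlinarith

lemma hasDerivAt_lsvLeft (hγ0 : 0 < γ) (hx : 0 < x) :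
    HasDerivAt (lsvLeft γ) (dfun γ x) x := by
  have key : ∀ y : ℝ, 0 < y → lsvLeft γ y = y + 2 ^ γ * y ^ (γ + 1) := by
    intro y hy
    have : y ^ (γ + 1) = y ^ γ * y := by
      rw [Real.rpow_add_one (ne_of_gt hy)]
    unfold lsvLeft; rw [this]; ring
  have hd : HasDerivAt (fun y : ℝ => y + 2 ^ γ * y ^ (γ + 1))
      (1 + 2 ^ γ * ((γ + 1) * x ^ (γ + 1 - 1))) x := by
    exact (hasDerivAt_id x).add (((Real.hasDerivAt_rpow_const (Or.inl (ne_of_gt hx)))).const_mul _)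
  have heq : (fun y : ℝ => y + 2 ^ γ * y ^ (γ + 1)) =ᶠ[nhds x] lsvLeft γ := by
    filter_upwards [IsOpen.mem_nhds isOpen_Ioi hx] with y hy
    exact (key y hy).symm
  have : HasDerivAt (lsvLeft γ) (1 + 2 ^ γ * ((γ + 1) * x ^ (γ + 1 - 1))) x :=
    hd.congr_of_eventuallyEq heq.symm
  convert this using 1
  unfold dfun
  rw [show γ + 1 - 1 = γ by ring]
  ring

lemma rpow_gap_le (hγ0 : 0 < γ) (hγ1 : γ ≤ 1) (hu : 0 < u) (huv : u ≤ v) :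
    v ^ γ - u ^ γ ≤ u ^ (γ - 1) * (v - u) := by
  set s := (v - u) / u with hs
  have hs0 : 0 ≤ s := div_nonneg (by linarith) hu.le
  have hv : v = u * (1 + s) := by rw [hs]; field_simp; ring
  have h1 : v ^ γ = u ^ γ * (1 + s) ^ γ := by
    rw [hv, Real.mul_rpow hu.le (by linarith)]
  have h2 : (1 + s) ^ γ ≤ 1 + γ * s := by
    have := rpow_one_add_le_one_add_mul_self (s := s) (by linarith) hγ0.le hγ1
    convert this using 2 <;> ring_nf
  have huγ : (0:ℝ) < u ^ γ := Real.rpow_pos_of_pos hu γ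
  have h3 : u ^ γ * s = u ^ (γ - 1) * (v - u) := by
    rw [Real.rpow_sub_one (ne_of_gt hu)]
    field_simp [hs]
    rw [hs]; field_simp
  have h4 : v ^ γ ≤ u ^ γ + γ * (u ^ γ * s) := by
    rw [h1]; nlinarith
  have h5 : γ * (u ^ γ * s) ≤ u ^ γ * s := by
    have : 0 ≤ u ^ γ * s := mul_nonneg huγ.le hs0
    nlinarith
  linarith [h4, h5, h3 ▸ h5]

lemma log_sub_log_le (hu : 1 ≤ u) (huv : u ≤ v) : Real.log v - Real.log u ≤ v - u := by
  have hu0 : (0:ℝ) < u := by linarith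
  have hv0 : (0:ℝ) < v := by linarith
  rw [← Real.log_div (ne_of_gt hv0) (ne_of_gt hu0)]
  have h1 : Real.log (v/u) ≤ v/u - 1 := Real.log_le_sub_one_of_pos (by positivity)
  have h2 : v/u - 1 = (v-u)/u := by field_simp
  have h3 : (v-u)/u ≤ v - u := by
    apply div_le_self (by linarith) hu
  linarith

lemma log_dfun_gap (hγ0 : 0 < γ) (hγ1 : γ ≤ 1) (hu : 0 < u) (huv : u ≤ v) :
    Real.log (dfun γ v) - Real.log (dfun γ u) ≤ 4 * (u ^ (γ - 1) * (v - u)) := by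
  have h2 : (0:ℝ) < 2 ^ γ := Real.rpow_pos_of_pos two_pos γ
  have h2' : (2:ℝ) ^ γ ≤ 2 := by
    calc (2:ℝ) ^ γ ≤ 2 ^ (1:ℝ) := Real.rpow_le_rpow_of_exponent_le (by norm_num) hγ1
      _ = 2 := by norm_num
  have hmono : dfun γ u ≤ dfun γ v := dfun_monotone hγ0.le hu.le huv
  have h1 : Real.log (dfun γ v) - Real.log (dfun γ u) ≤ dfun γ v - dfun γ u :=
    log_sub_log_le (dfun_ge_one hγ0.le hu.le) hmono
  have hgap : v ^ γ - u ^ γ ≤ u ^ (γ - 1) * (v - u) := rpow_gap_le hγ0 hγ1 hu huv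
  have hge : (0:ℝ) ≤ v ^ γ - u ^ γ :=
    sub_nonneg.mpr (Real.rpow_le_rpow hu.le huv hγ0.le)
  have h3 : dfun γ v - dfun γ u = 2 ^ γ * (1 + γ) * (v ^ γ - u ^ γ) := by
    unfold dfun; ring
  have h4 : 2 ^ γ * (1 + γ) ≤ 4 := by nlinarith
  have h5 : (0:ℝ) < 2 ^ γ * (1+γ) := by nlinarith
  calc Real.log (dfun γ v) - Real.log (dfun γ u) ≤ dfun γ v - dfun γ u := h1
    _ = 2 ^ γ * (1 + γ) * (v ^ γ - u ^ γ) := h3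
    _ ≤ 4 * (v ^ γ - u ^ γ) := by nlinarith
    _ ≤ 4 * (u ^ (γ - 1) * (v - u)) := by linarith

lemma lsvLeft_gap_lower (hγ0 : 0 < γ) (ha : 0 < a) (hab : a ≤ b) :
    dfun γ a * (b - a) ≤ lsvLeft γ b - lsvLeft γ a := by
  rcases eq_or_lt_of_le hab with rfl | hlt
  · simp
  have hdiff : ∀ x ∈ Set.Icc a b, HasDerivAt (lsvLeft γ) (dfun γ x) x := by
    intro x hx
    exact hasDerivAt_lsvLeft hγ0 (lt_of_lt_of_le ha hx.1)
  have hcont : ContinuousOn (lsvLeft γ) (Set.Icc a b) :=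
    fun x hx => ((hdiff x hx).continuousAt).continuousWithinAt
  obtain ⟨c, hc, hder⟩ := exists_hasDerivAt_eq_slope (lsvLeft γ) (dfun γ) hlt hcont
    (fun x hx => hdiff x ⟨hx.1.le, hx.2.le⟩)
  have hmono : dfun γ a ≤ dfun γ c := dfun_monotone hγ0.le ha.le hc.1.le
  have hba : (0:ℝ) < b - a := by linarith
  have : dfun γ a * (b - a) ≤ dfun γ c * (b - a) :=
    mul_le_mul_of_nonneg_right hmono hba.le
  rw [hder] at this
  calc dfun γ a * (b - a) ≤ (lsvLeft γ b - lsvLeft γ a) / (b-a) * (b - a) := this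
    _ = lsvLeft γ b - lsvLeft γ a := by field_simp

lemma dfun_core (hγ0 : 0 < γ) (hγ1 : γ ≤ 1) (hx : 0 < x) (hx2 : x ≤ 1/2) :
    (1 + 2 ^ γ * x ^ γ) * (1 + γ/2 * x ^ γ) ≤ dfun γ x := by
  have ht0 : 0 ≤ x ^ γ := Real.rpow_nonneg hx.le γ
  have hc1 : (1:ℝ) ≤ 2 ^ γ := Real.one_le_rpow (by norm_num) hγ0.le
  have hct : 2 ^ γ * x ^ γ ≤ 1 := by
    rw [← Real.mul_rpow (by norm_num) hx.le]
    exact Real.rpow_le_one (by linarith) (by linarith) hγ0.le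
  have hfac : (0:ℝ) ≤ 2 ^ γ - 1/2 - 2 ^ γ * x ^ γ / 2 := by linarith
  unfold dfun
  nlinarith [mul_nonneg (mul_nonneg hγ0.le ht0) hfac]

lemma lsvLeft_pos_dup (hx : 0 < x) : 0 < lsvLeft γ x := by
  have h2 : (0:ℝ) < 2 ^ γ := Real.rpow_pos_of_pos two_pos γ
  have h3 : (0:ℝ) ≤ x ^ γ := Real.rpow_nonneg hx.le γ
  have : (0:ℝ) < 1 + 2 ^ γ * x ^ γ := by nlinarith
  exact mul_pos hx this

lemma core_ineq {αp : ℝ} (hαp : 0 < αp) (hαγ : αp ≤ γ) (hγ1 : γ ≤ 1)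
    (hb : 0 < b) (hbt : b ≤ v) (hv : v ≤ 1/2) :
    αp/2 * (b ^ (γ - 1) * (v - b)) ≤
      (lsvLeft γ v - lsvLeft γ b) / lsvLeft γ b - (v - b) / b := by
  have hγ0 : 0 < γ := lt_of_lt_of_le hαp hαγ
  have hgb : 0 < lsvLeft γ b := lsvLeft_pos_dup hb
  have hgap : dfun γ b * (v - b) ≤ lsvLeft γ v - lsvLeft γ b :=
    lsvLeft_gap_lower hγ0 hb hbt
  have hbγ : (0:ℝ) < b ^ γ := Real.rpow_pos_of_pos hb γ
  have hcore : (1 + 2 ^ γ * b ^ γ) * (1 + γ/2 * b ^ γ) ≤ dfun γ b :=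
    dfun_core hγ0 hγ1 hb (by linarith)
  have hgb_eq : lsvLeft γ b = b * (1 + 2 ^ γ * b ^ γ) := rfl
  have h2 : (0:ℝ) < 2 ^ γ := Real.rpow_pos_of_pos two_pos γ
  have hfac : (0:ℝ) < 1 + 2 ^ γ * b ^ γ := by nlinarith
  have key : ((v - b) * (1 + γ/2 * b ^ γ)) / b ≤
      (lsvLeft γ v - lsvLeft γ b) / lsvLeft γ b := by
    rw [div_le_div_iff₀ hb hgb]
    calc (v - b) * (1 + γ/2 * b ^ γ) * lsvLeft γ b
        = (v-b) * ((1 + 2 ^ γ * b ^ γ) * (1 + γ/2 * b ^ γ)) * b := by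
          rw [hgb_eq]; ring
      _ ≤ (v-b) * dfun γ b * b := by
          apply mul_le_mul_of_nonneg_right _ hb.le
          exact mul_le_mul_of_nonneg_left hcore (by linarith)
      _ ≤ (lsvLeft γ v - lsvLeft γ b) * b := by
          apply mul_le_mul_of_nonneg_right _ hb.le
          linarith [hgap]
  have hsplit : ((v - b) * (1 + γ/2 * b ^ γ)) / b
      = (v-b)/b + γ/2 * (b ^ (γ-1) * (v - b)) := by
    rw [Real.rpow_sub_one (ne_of_gt hb)]
    field_simp
  have hmono2 : αp/2 * (b ^ (γ-1) * (v - b)) ≤ γ/2 * (b ^ (γ-1) * (v - b)) := by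
    apply mul_le_mul_of_nonneg_right (by linarith)
    have h5 : (0:ℝ) < b ^ (γ-1) := Real.rpow_pos_of_pos hb _
    nlinarith
  rw [hsplit] at key
  linarith

end Calc2

-- chain lemmas, to be appended after defs in full file
section Chain

variable {α β p₁ p₂ : ℝ} {X : ℕ → ℝ → ℝ}

lemma sel_pos (hα : 0 < α) (hαβ : α < β) (ω : ℝ) : 0 < sel α β p₁ ω := by
  unfold sel; split_ifs <;> linarith

lemma le_sel (hαβ : α < β) (ω : ℝ) : α ≤ sel α β p₁ ω := by
  unfold sel; split_ifs <;> linarith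

lemma sel_le_one (hαβ : α < β) (hβ : β ≤ 1) (ω : ℝ) : sel α β p₁ ω ≤ 1 := by
  unfold sel; split_ifs <;> linarith

variable (hα : 0 < α) (hαβ : α < β) (hβ : β ≤ 1)
variable (hX : IsRandBackOrbit α β p₁ p₂ X)
include hX

lemma X_zero (ω : ℝ) : X 0 ω = 1 := hX.1 ω

lemma X_one (ω : ℝ) : X 1 ω = 1/2 := hX.2.1 ω

lemma X_pos : ∀ k ω, 0 < X k ω := by
  intro k ω
  match k with
  | 0 => rw [X_zero hX]; norm_num
  | 1 => rw [X_one hX]; norm_num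
  | (n+2) => exact (hX.2.2 (n+2) (by omega) ω).1.1

lemma X_le_half : ∀ k ω, X (k+1) ω ≤ 1/2 := by
  intro k ω
  match k with
  | 0 => rw [X_one hX]
  | (n+1) => exact (hX.2.2 (n+2) (by omega) ω).1.2

lemma gStep : ∀ k ω, lsvLeft (sel α β p₁ ω) (X (k+1) ω) = X k (phiMap p₁ p₂ ω) := by
  intro k ω
  match k with
  | 0 => rw [X_one hX, lsvLeft_half, X_zero hX]
  | (n+1) =>
    have h := (hX.2.2 (n+2) (by omega) ω).2
    rw [← lsv_eq_left (X_le_half hX (n+1) ω)]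
    simpa using h

include hα hαβ in
lemma X_lt : ∀ k ω, X (k+1) ω < X k ω := by
  intro k
  induction k with
  | zero => intro ω; rw [X_zero hX, X_one hX]; norm_num
  | succ n ih =>
    intro ω
    have hγ0 : (0:ℝ) ≤ sel α β p₁ ω := (sel_pos hα hαβ ω).le
    have h1 : lsvLeft (sel α β p₁ ω) (X (n+2) ω) = X (n+1) (phiMap p₁ p₂ ω) :=
      gStep hX (n+1) ω
    have h2 : lsvLeft (sel α β p₁ ω) (X (n+1) ω) = X n (phiMap p₁ p₂ ω) :=
      gStep hX n ω
    have h3 : lsvLeft (sel α β p₁ ω) (X (n+2) ω) < lsvLeft (sel α β p₁ ω) (X (n+1) ω) := by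
      rw [h1, h2]; exact ih (phiMap p₁ p₂ ω)
    exact lsvLeft_lt_reflect hγ0 (X_pos hX (n+1) ω).le h3

include hα hαβ in
lemma X_ratio : ∀ k ω, X k ω ≤ 2 * X (k+1) ω := by
  intro k
  induction k with
  | zero => intro ω; rw [X_zero hX, X_one hX]; norm_num
  | succ n ih =>
    intro ω
    have hγ0 : (0:ℝ) ≤ sel α β p₁ ω := (sel_pos hα hαβ ω).le
    have h1 : lsvLeft (sel α β p₁ ω) (X (n+1) ω) = X n (phiMap p₁ p₂ ω) := gStep hX n ω
    have h2 : lsvLeft (sel α β p₁ ω) (X (n+2) ω) = X (n+1) (phiMap p₁ p₂ ω) :=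
      gStep hX (n+1) ω
    have h3 : lsvLeft (sel α β p₁ ω) (X (n+1) ω) ≤ lsvLeft (sel α β p₁ ω) (2 * X (n+2) ω) := by
      calc lsvLeft (sel α β p₁ ω) (X (n+1) ω) = X n (phiMap p₁ p₂ ω) := h1
        _ ≤ 2 * X (n+1) (phiMap p₁ p₂ ω) := ih (phiMap p₁ p₂ ω)
        _ = 2 * lsvLeft (sel α β p₁ ω) (X (n+2) ω) := by rw [h2]
        _ ≤ lsvLeft (sel α β p₁ ω) (2 * X (n+2) ω) :=
            two_mul_lsvLeft_le hγ0 (X_pos hX (n+2) ω).le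
    exact lsvLeft_le_reflect hγ0 (X_pos hX (n+1) ω).le
      (by linarith [X_pos hX (n+2) ω]) h3

end Chain

noncomputable def leftIter (α β p₁ p₂ : ℝ) : ℕ → ℝ → ℝ → ℝ
  | 0, _, x => x
  | n + 1, ω, x => leftIter α β p₁ p₂ n (phiMap p₁ p₂ ω) (lsvLeft (sel α β p₁ ω) x)

noncomputable def derivProd (α β p₁ p₂ : ℝ) : ℕ → ℝ → ℝ → ℝ
  | 0, _, _ => 1
  | n + 1, ω, x =>
      derivProd α β p₁ p₂ n (phiMap p₁ p₂ ω) (lsvLeft (sel α β p₁ ω) x) *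
        dfun (sel α β p₁ ω) x

section Iter

variable {α β p₁ p₂ : ℝ} {X : ℕ → ℝ → ℝ}

lemma leftIter_zero (ω x : ℝ) : leftIter α β p₁ p₂ 0 ω x = x := rfl

lemma leftIter_succ (n : ℕ) (ω x : ℝ) :
    leftIter α β p₁ p₂ (n+1) ω x
      = leftIter α β p₁ p₂ n (phiMap p₁ p₂ ω) (lsvLeft (sel α β p₁ ω) x) := rfl

lemma derivProd_zero (ω x : ℝ) : derivProd α β p₁ p₂ 0 ω x = 1 := rfl

lemma derivProd_succ (n : ℕ) (ω x : ℝ) :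
    derivProd α β p₁ p₂ (n+1) ω x
      = derivProd α β p₁ p₂ n (phiMap p₁ p₂ ω) (lsvLeft (sel α β p₁ ω) x) *
          dfun (sel α β p₁ ω) x := rfl

lemma randIter_succ (n : ℕ) (ω x : ℝ) :
    randIter α β p₁ p₂ (n+1) ω x
      = randIter α β p₁ p₂ n (phiMap p₁ p₂ ω) (lsv (sel α β p₁ ω) x) := rfl

lemma leftIter_pos (hα : 0 < α) (hαβ : α < β) :
    ∀ (n : ℕ) (ω x : ℝ), 0 < x → 0 < leftIter α β p₁ p₂ n ω x := by
  intro n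
  induction n with
  | zero => intro ω x hx; simpa [leftIter_zero] using hx
  | succ m ih =>
    intro ω x hx
    rw [leftIter_succ]
    exact ih _ _ (lsvLeft_pos hx)

lemma leftIter_mono (hα : 0 < α) (hαβ : α < β) :
    ∀ (n : ℕ) (ω u v : ℝ), 0 < u → u ≤ v →
      leftIter α β p₁ p₂ n ω u ≤ leftIter α β p₁ p₂ n ω v := by
  intro n
  induction n with
  | zero => intro ω u v _ huv; simpa [leftIter_zero] using huv
  | succ m ih =>
    intro ω u v hu huv
    rw [leftIter_succ, leftIter_succ]
    exact ih _ _ _ (lsvLeft_pos hu)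
      (lsvLeft_monotone (sel_pos hα hαβ ω).le hu.le huv)

lemma derivProd_ge_one (hα : 0 < α) (hαβ : α < β) :
    ∀ (n : ℕ) (ω x : ℝ), 0 < x → 1 ≤ derivProd α β p₁ p₂ n ω x := by
  intro n
  induction n with
  | zero => intro ω x _; rw [derivProd_zero]
  | succ m ih =>
    intro ω x hx
    rw [derivProd_succ]
    have h1 := ih (phiMap p₁ p₂ ω) (lsvLeft (sel α β p₁ ω) x) (lsvLeft_pos hx)
    have h2 := dfun_ge_one (γ := sel α β p₁ ω) (sel_pos hα hαβ ω).le hx.le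
    nlinarith

lemma derivProd_mono (hα : 0 < α) (hαβ : α < β) :
    ∀ (n : ℕ) (ω u v : ℝ), 0 < u → u ≤ v →
      derivProd α β p₁ p₂ n ω u ≤ derivProd α β p₁ p₂ n ω v := by
  intro n
  induction n with
  | zero => intro ω u v _ _; rw [derivProd_zero, derivProd_zero]
  | succ m ih =>
    intro ω u v hu huv
    rw [derivProd_succ, derivProd_succ]
    have hγ0 : (0:ℝ) ≤ sel α β p₁ ω := (sel_pos hα hαβ ω).le
    have hgu : 0 < lsvLeft (sel α β p₁ ω) u := lsvLeft_pos hu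
    have h1 := ih (phiMap p₁ p₂ ω) _ _ hgu (lsvLeft_monotone hγ0 hu.le huv)
    have h2 := dfun_monotone hγ0 hu.le huv
    have h3 := derivProd_ge_one (p₁ := p₁) (p₂ := p₂) hα hαβ m (phiMap p₁ p₂ ω) (lsvLeft (sel α β p₁ ω) u) hgu
    have h4 := dfun_ge_one hγ0 hu.le
    have h5 := dfun_ge_one hγ0 (le_trans hu.le huv)
    nlinarith

lemma hasDerivAt_leftIter (hα : 0 < α) (hαβ : α < β) :
    ∀ (n : ℕ) (ω x : ℝ), 0 < x →
      HasDerivAt (leftIter α β p₁ p₂ n ω) (derivProd α β p₁ p₂ n ω x) x := by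
  intro n
  induction n with
  | zero =>
    intro ω x _
    have : HasDerivAt (fun y : ℝ => y) 1 x := hasDerivAt_id x
    exact this
  | succ m ih =>
    intro ω x hx
    have hg : HasDerivAt (lsvLeft (sel α β p₁ ω)) (dfun (sel α β p₁ ω) x) x :=
      hasDerivAt_lsvLeft (sel_pos hα hαβ ω) hx
    have hG : HasDerivAt (leftIter α β p₁ p₂ m (phiMap p₁ p₂ ω))
        (derivProd α β p₁ p₂ m (phiMap p₁ p₂ ω) (lsvLeft (sel α β p₁ ω) x))
        (lsvLeft (sel α β p₁ ω) x) := ih _ _ (lsvLeft_pos hx)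
    have hcomp := HasDerivAt.comp x hG hg
    have hfun : leftIter α β p₁ p₂ m (phiMap p₁ p₂ ω) ∘ lsvLeft (sel α β p₁ ω)
        = leftIter α β p₁ p₂ (m+1) ω := by
      funext y; simp only [Function.comp_apply, leftIter_succ]
    rw [hfun] at hcomp
    rw [derivProd_succ]
    exact hcomp

lemma leftIter_X_bot (hα : 0 < α) (hαβ : α < β) (hX : IsRandBackOrbit α β p₁ p₂ X) :
    ∀ (k : ℕ) (ω : ℝ), leftIter α β p₁ p₂ k ω (X (k+1) ω) = 1/2 := by
  intro k
  induction k with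
  | zero => intro ω; rw [leftIter_zero, X_one hX]
  | succ m ih =>
    intro ω
    rw [leftIter_succ, gStep hX (m+1) ω]
    exact ih (phiMap p₁ p₂ ω)

lemma leftIter_X_top (hα : 0 < α) (hαβ : α < β) (hX : IsRandBackOrbit α β p₁ p₂ X) :
    ∀ (k : ℕ) (ω : ℝ), leftIter α β p₁ p₂ k ω (X k ω) = 1 := by
  intro k
  induction k with
  | zero => intro ω; rw [leftIter_zero, X_zero hX]
  | succ m ih =>
    intro ω
    rw [leftIter_succ, gStep hX m ω]
    exact ih (phiMap p₁ p₂ ω)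

lemma randIter_eq_leftIter (hα : 0 < α) (hαβ : α < β) (hX : IsRandBackOrbit α β p₁ p₂ X) :
    ∀ (k : ℕ) (ω z : ℝ), X (k+1) ω ≤ z → z ≤ X k ω →
      randIter α β p₁ p₂ k ω z = leftIter α β p₁ p₂ k ω z := by
  intro k
  induction k with
  | zero => intro ω z _ _; rfl
  | succ m ih =>
    intro ω z hz1 hz2
    have hz_half : z ≤ 1/2 := le_trans hz2 (X_le_half hX m ω)
    have hγ0 : (0:ℝ) ≤ sel α β p₁ ω := (sel_pos hα hαβ ω).le
    have hzpos : 0 < z := lt_of_lt_of_le (X_pos hX (m+2) ω) hz1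
    rw [randIter_succ, leftIter_succ, lsv_eq_left hz_half]
    apply ih (phiMap p₁ p₂ ω)
    · rw [← gStep hX (m+1) ω]
      exact lsvLeft_monotone hγ0 (X_pos hX (m+2) ω).le hz1
    · rw [← gStep hX m ω]
      exact lsvLeft_monotone hγ0 hzpos.le hz2

end Iter

section Dist

variable {α β p₁ p₂ : ℝ} {X : ℕ → ℝ → ℝ}

lemma crude (hα : 0 < α) (hαβ : α < β) (hβ : β ≤ 1) (hX : IsRandBackOrbit α β p₁ p₂ X) :
    ∀ (k : ℕ) (ω u v : ℝ), X (k+1) ω ≤ u → u ≤ v → v ≤ X k ω →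
      Real.log (derivProd α β p₁ p₂ k ω v) - Real.log (derivProd α β p₁ p₂ k ω u)
        ≤ 8/α * (1 - (X k ω - X (k+1) ω) / X (k+1) ω) := by
  intro k
  induction k with
  | zero =>
    intro ω u v _ _ _
    rw [derivProd_zero, derivProd_zero, X_zero hX, X_one hX]
    norm_num
  | succ m ih =>
    intro ω u v hu huv hv
    set γ := sel α β p₁ ω with hγdef
    set ω' := phiMap p₁ p₂ ω with hω'
    set b := X (m+2) ω with hbdef
    set t := X (m+1) ω with htdef
    have hγ0 : 0 < γ := sel_pos hα hαβ ω
    have hγα : α ≤ γ := le_sel hαβ ω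
    have hγ1 : γ ≤ 1 := sel_le_one hαβ hβ ω
    have hb : 0 < b := X_pos hX (m+2) ω
    have hbt : b ≤ t := (X_lt hα hαβ hX (m+1) ω).le
    have ht2 : t ≤ 1/2 := X_le_half hX m ω
    have hu0 : 0 < u := lt_of_lt_of_le hb hu
    have hv0 : 0 < v := lt_of_lt_of_le hu0 huv
    have hgu : 0 < lsvLeft γ u := lsvLeft_pos hu0
    have hgv : 0 < lsvLeft γ v := lsvLeft_pos hv0
    have hDu := derivProd_ge_one (p₁ := p₁) (p₂ := p₂) hα hαβ m ω' (lsvLeft γ u) hgu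
    have hDv := derivProd_ge_one (p₁ := p₁) (p₂ := p₂) hα hαβ m ω' (lsvLeft γ v) hgv
    have hdu := dfun_ge_one (γ := γ) hγ0.le hu0.le
    have hdv := dfun_ge_one (γ := γ) hγ0.le hv0.le
    have hsplit : ∀ z : ℝ, 0 < z → 0 < lsvLeft γ z →
        Real.log (derivProd α β p₁ p₂ (m+1) ω z)
          = Real.log (derivProd α β p₁ p₂ m ω' (lsvLeft γ z)) + Real.log (dfun γ z) := by
      intro z hz hgz
      rw [derivProd_succ]
      exact Real.log_mul
        (by have := derivProd_ge_one (p₁ := p₁) (p₂ := p₂) hα hαβ m ω' (lsvLeft γ z) hgz; linarith)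
        (by have := dfun_ge_one (γ := γ) hγ0.le hz.le; linarith)
    rw [hsplit v hv0 hgv, hsplit u hu0 hgu]
    -- term 2 : inductive bound
    have hgub : X (m+1) ω' ≤ lsvLeft γ u := by
      rw [← gStep hX (m+1) ω]
      exact lsvLeft_monotone hγ0.le hb.le hu
    have hguv : lsvLeft γ u ≤ lsvLeft γ v := lsvLeft_monotone hγ0.le hu0.le huv
    have hgvt : lsvLeft γ v ≤ X m ω' := by
      rw [← gStep hX m ω]
      exact lsvLeft_monotone hγ0.le hv0.le hv
    have hterm2 := ih ω' (lsvLeft γ u) (lsvLeft γ v) hgub hguv hgvt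
    -- term 1
    have hterm1 : Real.log (dfun γ v) - Real.log (dfun γ u) ≤ 4 * (b ^ (γ-1) * (t - b)) := by
      have h1 : Real.log (dfun γ v) - Real.log (dfun γ u) ≤ 4 * (u ^ (γ-1) * (v - u)) :=
        log_dfun_gap hγ0 hγ1 hu0 huv
      have h2 : u ^ (γ-1) ≤ b ^ (γ-1) :=
        Real.rpow_le_rpow_of_nonpos hb hu (by linarith)
      have h3 : v - u ≤ t - b := by linarith
      have h4 : u ^ (γ-1) * (v-u) ≤ b ^ (γ-1) * (t-b) := by
        apply mul_le_mul h2 h3 (by linarith) (Real.rpow_nonneg hb.le _)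
      linarith
    -- core inequality
    have hcore : α/2 * (b ^ (γ - 1) * (t - b)) ≤
        (X m ω' - X (m+1) ω') / (X (m+1) ω') - (t - b) / b := by
      have := core_ineq (γ := γ) (b := b) (v := t) hα hγα hγ1 hb hbt ht2
      rwa [gStep hX m ω, gStep hX (m+1) ω] at this
    set Q := b ^ (γ-1) * (t - b) with hQ
    have hQ0 : 0 ≤ Q := mul_nonneg (Real.rpow_nonneg hb.le _) (by linarith)
    set R := (X m ω' - X (m+1) ω') / (X (m+1) ω') with hR
    have hmul : 8/α * ((t-b)/b + α/2 * Q) ≤ 8/α * R := by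
      apply mul_le_mul_of_nonneg_left (by linarith) (by positivity)
    have hexp : 8/α * ((t-b)/b + α/2 * Q) = 8/α * ((t-b)/b) + 4 * Q := by
      field_simp; ring
    have hrhs : 8/α * (1 - R) ≤ 8/α * (1 - (t-b)/b) - 4 * Q := by
      have e1 : 8/α * (1 - R) = 8/α - 8/α * R := by ring
      have e2 : 8/α * (1 - (t-b)/b) = 8/α - 8/α * ((t-b)/b) := by ring
      linarith
    linarith [hterm2, hterm1, hrhs]

lemma crude_const (hα : 0 < α) (hαβ : α < β) (hβ : β ≤ 1)
    (hX : IsRandBackOrbit α β p₁ p₂ X)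
    (k : ℕ) (ω u v : ℝ) (hu : X (k+1) ω ≤ u) (huv : u ≤ v) (hv : v ≤ X k ω) :
      Real.log (derivProd α β p₁ p₂ k ω v) - Real.log (derivProd α β p₁ p₂ k ω u) ≤ 8/α := by
  have h := crude hα hαβ hβ hX k ω u v hu huv hv
  have hb : 0 < X (k+1) ω := X_pos hX (k+1) ω
  have hbt : X (k+1) ω ≤ X k ω := (X_lt hα hαβ hX k ω).le
  have hnn : 0 ≤ (X k ω - X (k+1) ω) / X (k+1) ω := div_nonneg (by linarith) hb.le
  have h8 : 0 < 8/α := by positivity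
  calc Real.log (derivProd α β p₁ p₂ k ω v) - Real.log (derivProd α β p₁ p₂ k ω u)
      ≤ 8/α * (1 - (X k ω - X (k+1) ω) / X (k+1) ω) := h
    _ ≤ 8/α * 1 := by apply mul_le_mul_of_nonneg_left (by linarith) h8.le
    _ = 8/α := by ring

lemma gap_bound (hα : 0 < α) (hαβ : α < β) (hβ : β ≤ 1)
    (hX : IsRandBackOrbit α β p₁ p₂ X)
    (k : ℕ) (ω u v : ℝ) (hu : X (k+1) ω ≤ u) (huv : u ≤ v) (hv : v ≤ X k ω) :
    v - u ≤ 2 * Real.exp (8/α) * (X k ω - X (k+1) ω) *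
      (leftIter α β p₁ p₂ k ω v - leftIter α β p₁ p₂ k ω u) := by
  set b := X (k+1) ω with hbdef
  set t := X k ω with htdef
  have hb : 0 < b := X_pos hX (k+1) ω
  have hbt : b < t := X_lt hα hαβ hX k ω
  have hu0 : 0 < u := lt_of_lt_of_le hb hu
  rcases eq_or_lt_of_le huv with rfl | hlt
  · simp
  -- MVT on [u,v]
  have hcont1 : ContinuousOn (leftIter α β p₁ p₂ k ω) (Set.Icc u v) := fun z hz =>
    ((hasDerivAt_leftIter hα hαβ k ω z (lt_of_lt_of_le hu0 hz.1)).continuousAt).continuousWithinAt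
  obtain ⟨η, hη, hηd⟩ := exists_hasDerivAt_eq_slope (leftIter α β p₁ p₂ k ω)
    (derivProd α β p₁ p₂ k ω) hlt hcont1
    (fun z hz => hasDerivAt_leftIter hα hαβ k ω z (lt_of_lt_of_le hu0 hz.1.le))
  -- MVT on [b,t]
  have hcont2 : ContinuousOn (leftIter α β p₁ p₂ k ω) (Set.Icc b t) := fun z hz =>
    ((hasDerivAt_leftIter hα hαβ k ω z (lt_of_lt_of_le hb hz.1)).continuousAt).continuousWithinAt
  obtain ⟨ξ, hξ, hξd⟩ := exists_hasDerivAt_eq_slope (leftIter α β p₁ p₂ k ω)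
    (derivProd α β p₁ p₂ k ω) hbt hcont2
    (fun z hz => hasDerivAt_leftIter hα hαβ k ω z (lt_of_lt_of_le hb hz.1.le))
  rw [leftIter_X_top hα hαβ hX k ω, leftIter_X_bot hα hαβ hX k ω] at hξd
  have hξpos : 0 < ξ := lt_trans hb hξ.1
  have hηpos : 0 < η := lt_trans hu0 hη.1
  have hDη : 1 ≤ derivProd α β p₁ p₂ k ω η := derivProd_ge_one (p₁ := p₁) (p₂ := p₂) hα hαβ k ω η hηpos
  have hDξ : 1 ≤ derivProd α β p₁ p₂ k ω ξ := derivProd_ge_one (p₁ := p₁) (p₂ := p₂) hα hαβ k ω ξ hξpos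
  -- crude comparison between ξ and η
  have hcc : Real.log (derivProd α β p₁ p₂ k ω ξ)
      - Real.log (derivProd α β p₁ p₂ k ω η) ≤ 8/α := by
    rcases le_total η ξ with hle | hle
    · exact crude_const hα hαβ hβ hX k ω η ξ (le_trans hu hη.1.le) hle hξ.2.le
    · have hmono := derivProd_mono (p₁ := p₁) (p₂ := p₂) hα hαβ k ω ξ η hξpos hle
      have h0 : Real.log (derivProd α β p₁ p₂ k ω ξ)
          ≤ Real.log (derivProd α β p₁ p₂ k ω η) :=
        Real.log_le_log (by linarith) hmono
      have : 0 < 8/α := by positivity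
      linarith
  have hkey : derivProd α β p₁ p₂ k ω ξ
      ≤ Real.exp (8/α) * derivProd α β p₁ p₂ k ω η := by
    have h1 : derivProd α β p₁ p₂ k ω ξ
        = Real.exp (Real.log (derivProd α β p₁ p₂ k ω ξ)) :=
      (Real.exp_log (by linarith)).symm
    rw [h1]
    calc Real.exp (Real.log (derivProd α β p₁ p₂ k ω ξ))
        ≤ Real.exp (8/α + Real.log (derivProd α β p₁ p₂ k ω η)) := by
          apply Real.exp_le_exp.mpr; linarith
      _ = Real.exp (8/α) * derivProd α β p₁ p₂ k ω η := by
          rw [Real.exp_add, Real.exp_log (by linarith)]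
  have hξval : 2 * (t - b) * derivProd α β p₁ p₂ k ω ξ = 1 := by
    have hne : t - b ≠ 0 := sub_ne_zero.mpr (ne_of_gt hbt)
    rw [hξd]
    field_simp
    norm_num
  have hGvu : leftIter α β p₁ p₂ k ω v - leftIter α β p₁ p₂ k ω u
      = derivProd α β p₁ p₂ k ω η * (v - u) := by
    have hne : v - u ≠ 0 := sub_ne_zero.mpr (ne_of_gt hlt)
    rw [hηd]
    field_simp
  have hone : 1 ≤ 2 * (t - b) * (Real.exp (8/α) * derivProd α β p₁ p₂ k ω η) := by
    calc (1:ℝ) = 2 * (t - b) * derivProd α β p₁ p₂ k ω ξ := hξval.symm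
      _ ≤ 2 * (t - b) * (Real.exp (8/α) * derivProd α β p₁ p₂ k ω η) := by
          apply mul_le_mul_of_nonneg_left hkey (by linarith)
  calc v - u = 1 * (v - u) := (one_mul _).symm
    _ ≤ (2 * (t - b) * (Real.exp (8/α) * derivProd α β p₁ p₂ k ω η)) * (v - u) := by
        apply mul_le_mul_of_nonneg_right hone (by linarith)
    _ = 2 * Real.exp (8/α) * (t - b) * (derivProd α β p₁ p₂ k ω η * (v - u)) := by ring
    _ = 2 * Real.exp (8/α) * (t - b) *
        (leftIter α β p₁ p₂ k ω v - leftIter α β p₁ p₂ k ω u) := by rw [hGvu]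

lemma main_dist (hα : 0 < α) (hαβ : α < β) (hβ : β ≤ 1)
    (hX : IsRandBackOrbit α β p₁ p₂ X) :
    ∀ (k : ℕ) (ω u v : ℝ), X (k+1) ω ≤ u → u ≤ v → v ≤ X k ω →
      Real.log (derivProd α β p₁ p₂ k ω v) - Real.log (derivProd α β p₁ p₂ k ω u)
        ≤ (16/α * Real.exp (8/α)) * ((1 - (X k ω - X (k+1) ω) / X (k+1) ω) *
            (leftIter α β p₁ p₂ k ω v - leftIter α β p₁ p₂ k ω u)) := by
  intro k
  induction k with
  | zero =>
    intro ω u v _ _ _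
    rw [derivProd_zero, derivProd_zero, X_zero hX, X_one hX]
    norm_num
  | succ m ih =>
    intro ω u v hu huv hv
    set γ := sel α β p₁ ω with hγdef
    set ω' := phiMap p₁ p₂ ω with hω'
    set b := X (m+2) ω with hbdef
    set t := X (m+1) ω with htdef
    have hγ0 : 0 < γ := sel_pos hα hαβ ω
    have hγα : α ≤ γ := le_sel hαβ ω
    have hγ1 : γ ≤ 1 := sel_le_one hαβ hβ ω
    have hb : 0 < b := X_pos hX (m+2) ω
    have hbt : b ≤ t := (X_lt hα hαβ hX (m+1) ω).le
    have ht2 : t ≤ 1/2 := X_le_half hX m ω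
    have hu0 : 0 < u := lt_of_lt_of_le hb hu
    have hv0 : 0 < v := lt_of_lt_of_le hu0 huv
    have hgu : 0 < lsvLeft γ u := lsvLeft_pos hu0
    have hgv : 0 < lsvLeft γ v := lsvLeft_pos hv0
    have hsplit : ∀ z : ℝ, 0 < z → 0 < lsvLeft γ z →
        Real.log (derivProd α β p₁ p₂ (m+1) ω z)
          = Real.log (derivProd α β p₁ p₂ m ω' (lsvLeft γ z)) + Real.log (dfun γ z) := by
      intro z hz hgz
      rw [derivProd_succ]
      exact Real.log_mul
        (by have := derivProd_ge_one (p₁ := p₁) (p₂ := p₂) hα hαβ m ω' (lsvLeft γ z) hgz; linarith)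
        (by have := dfun_ge_one (γ := γ) hγ0.le hz.le; linarith)
    rw [hsplit v hv0 hgv, hsplit u hu0 hgu]
    have hgub : X (m+1) ω' ≤ lsvLeft γ u := by
      rw [← gStep hX (m+1) ω]
      exact lsvLeft_monotone hγ0.le hb.le hu
    have hguv : lsvLeft γ u ≤ lsvLeft γ v := lsvLeft_monotone hγ0.le hu0.le huv
    have hgvt : lsvLeft γ v ≤ X m ω' := by
      rw [← gStep hX m ω]
      exact lsvLeft_monotone hγ0.le hv0.le hv
    set Δ := leftIter α β p₁ p₂ m ω' (lsvLeft γ v) - leftIter α β p₁ p₂ m ω' (lsvLeft γ u)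
      with hΔdef
    have hΔeq : leftIter α β p₁ p₂ (m+1) ω v - leftIter α β p₁ p₂ (m+1) ω u = Δ := by
      rw [leftIter_succ, leftIter_succ]
    have hΔ0 : 0 ≤ Δ := by
      rw [hΔdef]
      have := leftIter_mono (p₁ := p₁) (p₂ := p₂) hα hαβ m ω' (lsvLeft γ u) (lsvLeft γ v)
        hgu hguv
      linarith
    have hterm2 := ih ω' (lsvLeft γ u) (lsvLeft γ v) hgub hguv hgvt
    -- gap control
    have hgap : v - u ≤ 2 * Real.exp (8/α) * (t - b) * Δ := by
      have := gap_bound hα hαβ hβ hX (m+1) ω u v hu huv hv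
      rw [hΔeq] at this
      exact this
    have hterm1 : Real.log (dfun γ v) - Real.log (dfun γ u)
        ≤ 8 * Real.exp (8/α) * ((b ^ (γ-1) * (t - b)) * Δ) := by
      have h1 : Real.log (dfun γ v) - Real.log (dfun γ u) ≤ 4 * (u ^ (γ-1) * (v - u)) :=
        log_dfun_gap hγ0 hγ1 hu0 huv
      have h2 : u ^ (γ-1) ≤ b ^ (γ-1) :=
        Real.rpow_le_rpow_of_nonpos hb hu (by linarith)
      have hbp : (0:ℝ) ≤ b ^ (γ-1) := Real.rpow_nonneg hb.le _
      have hup : (0:ℝ) ≤ u ^ (γ-1) := Real.rpow_nonneg hu0.le _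
      have h4 : u ^ (γ-1) * (v-u) ≤ b ^ (γ-1) * (2 * Real.exp (8/α) * (t - b) * Δ) := by
        apply mul_le_mul h2 hgap (by linarith) hbp
      calc Real.log (dfun γ v) - Real.log (dfun γ u) ≤ 4 * (u ^ (γ-1) * (v - u)) := h1
        _ ≤ 4 * (b ^ (γ-1) * (2 * Real.exp (8/α) * (t - b) * Δ)) := by linarith
        _ = 8 * Real.exp (8/α) * ((b ^ (γ-1) * (t - b)) * Δ) := by ring
    have hcore : α/2 * (b ^ (γ - 1) * (t - b)) ≤
        (X m ω' - X (m+1) ω') / (X (m+1) ω') - (t - b) / b := by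
      have := core_ineq (γ := γ) (b := b) (v := t) hα hγα hγ1 hb hbt ht2
      rwa [gStep hX m ω, gStep hX (m+1) ω] at this
    set Q := b ^ (γ-1) * (t - b) with hQ
    have hQ0 : 0 ≤ Q := mul_nonneg (Real.rpow_nonneg hb.le _) (by linarith)
    set R := (X m ω' - X (m+1) ω') / (X (m+1) ω') with hR
    set C2 := 16/α * Real.exp (8/α) with hC2
    have hC2pos : 0 < C2 := by positivity
    have hstep : (1 - R) ≤ (1 - (t-b)/b) - α/2 * Q := by linarith
    have hstep2 : (1 - R) * Δ ≤ ((1 - (t-b)/b) - α/2 * Q) * Δ :=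
      mul_le_mul_of_nonneg_right hstep hΔ0
    have hstep3 : C2 * ((1 - R) * Δ) ≤ C2 * (((1 - (t-b)/b) - α/2 * Q) * Δ) :=
      mul_le_mul_of_nonneg_left hstep2 hC2pos.le
    have hCalg : C2 * (((1 - (t-b)/b) - α/2 * Q) * Δ)
        = C2 * ((1 - (t-b)/b) * Δ) - 8 * Real.exp (8/α) * (Q * Δ) := by
      rw [hC2]
      field_simp
      ring
    rw [hΔeq]
    linarith [hterm2, hterm1, hstep3, hCalg ▸ hstep3]

end Dist

/-- For `0 < α < β ≤ 1` and `p₁, p₂ > 0` with `p₁ + p₂ = 1`, there is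
`C > 0` such that for every `n ≥ 1`, `ω ∈ [0,1]`, and `x, y` in the interior of `J_n(ω)`,
the map `T_ω^n` is differentiable at `x` and `y` with positive derivatives and
`|log (T_ω^n)'(x) − log (T_ω^n)'(y)| ≤ C·|T_ω^n(x) − T_ω^n(y)| ≤ C`. -/
theorem log_distortion (α β p₁ p₂ : ℝ) (hα : 0 < α) (hαβ : α < β) (hβ : β ≤ 1)
    (hp₁ : 0 < p₁) (hp₂ : 0 < p₂) (hp : p₁ + p₂ = 1)
    (X X' : ℕ → ℝ → ℝ) (hX : IsRandBackOrbit α β p₁ p₂ X)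
    (hX' : IsRandBackOrbitPrime p₁ p₂ X X') :
    ∃ C : ℝ, 0 < C ∧ ∀ n : ℕ, 1 ≤ n → ∀ ω ∈ Set.Icc (0 : ℝ) 1,
      ∀ x ∈ Set.Ioo (X' n ω) (X' (n - 1) ω), ∀ y ∈ Set.Ioo (X' n ω) (X' (n - 1) ω),
        DifferentiableAt ℝ (randIter α β p₁ p₂ n ω) x ∧
        DifferentiableAt ℝ (randIter α β p₁ p₂ n ω) y ∧
        0 < deriv (randIter α β p₁ p₂ n ω) x ∧
        0 < deriv (randIter α β p₁ p₂ n ω) y ∧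
        |Real.log (deriv (randIter α β p₁ p₂ n ω) x) -
            Real.log (deriv (randIter α β p₁ p₂ n ω) y)| ≤
          C * |randIter α β p₁ p₂ n ω x - randIter α β p₁ p₂ n ω y| ∧
        C * |randIter α β p₁ p₂ n ω x - randIter α β p₁ p₂ n ω y| ≤ C := by
  have hCpos : (0:ℝ) < 16/α * Real.exp (8/α) := by positivity
  refine ⟨16/α * Real.exp (8/α), hCpos, ?_⟩
  set C := 16/α * Real.exp (8/α) with hCdef
  intro n hn ω _ x hx y hy
  obtain ⟨k, rfl⟩ : ∃ k, n = k + 1 := ⟨n - 1, by omega⟩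
  rw [Nat.add_sub_cancel] at hx hy
  set ω' := phiMap p₁ p₂ ω with hω'def
  set s := Set.Ioo (X' (k+1) ω) (X' k ω) with hsdef
  have hX'eq : ∀ j, X' j ω = (X j ω' + 1)/2 := by
    intro j
    match j with
    | 0 => rw [hX'.1 ω, hX.1 ω']; norm_num
    | 1 => rw [hX'.2.1 ω, hX.2.1 ω']; norm_num
    | (j+2) => exact hX'.2.2 (j+2) (by omega) ω
  have hmem : ∀ z ∈ s, X (k+1) ω' ≤ 2*z - 1 ∧ 2*z - 1 ≤ X k ω' := by
    intro z hz
    have h1 := hz.1; have h2 := hz.2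
    rw [hX'eq (k+1)] at h1; rw [hX'eq k] at h2
    constructor <;> linarith
  have hzpos : ∀ z ∈ s, 0 < 2*z - 1 := by
    intro z hz
    have := X_pos hX (k+1) ω'
    have := (hmem z hz).1
    linarith
  have hhalf : ∀ z ∈ s, ¬ (z ≤ 1/2) := by
    intro z hz
    have := hzpos z hz
    push_neg
    linarith
  have heqfun : ∀ z ∈ s, randIter α β p₁ p₂ (k+1) ω z
      = leftIter α β p₁ p₂ k ω' (2*z - 1) := by
    intro z hz
    rw [randIter_succ, lsv_eq_right (hhalf z hz)]
    exact randIter_eq_leftIter hα hαβ hX k ω' (2*z-1) (hmem z hz).1 (hmem z hz).2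
  have hopen : IsOpen s := isOpen_Ioo
  have hder : ∀ z ∈ s, HasDerivAt (randIter α β p₁ p₂ (k+1) ω)
      (derivProd α β p₁ p₂ k ω' (2*z-1) * 2) z := by
    intro z hz
    have haff : HasDerivAt (fun w : ℝ => 2*w - 1) 2 z := by
      simpa using ((hasDerivAt_id z).const_mul (2:ℝ)).sub_const 1
    have hGd := hasDerivAt_leftIter (p₁ := p₁) (p₂ := p₂) hα hαβ k ω' (2*z-1) (hzpos z hz)
    have hcomp := HasDerivAt.comp z hGd haff
    apply hcomp.congr_of_eventuallyEq
    filter_upwards [hopen.mem_nhds hz] with w hw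
    rw [heqfun w hw]
    simp only [Function.comp_apply]
  have hderiv_eq : ∀ z ∈ s, deriv (randIter α β p₁ p₂ (k+1) ω) z
      = derivProd α β p₁ p₂ k ω' (2*z-1) * 2 := fun z hz => (hder z hz).deriv
  have hD1 : ∀ z ∈ s, 1 ≤ derivProd α β p₁ p₂ k ω' (2*z-1) := by
    intro z hz
    exact derivProd_ge_one (p₁ := p₁) (p₂ := p₂) hα hαβ k ω' (2*z-1) (hzpos z hz)
  have hval : ∀ z ∈ s, 1/2 ≤ leftIter α β p₁ p₂ k ω' (2*z-1)
      ∧ leftIter α β p₁ p₂ k ω' (2*z-1) ≤ 1 := by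
    intro z hz
    constructor
    · rw [← leftIter_X_bot hα hαβ hX k ω']
      exact leftIter_mono (p₁ := p₁) (p₂ := p₂) hα hαβ k ω' _ _ (X_pos hX (k+1) ω') (hmem z hz).1
    · calc leftIter α β p₁ p₂ k ω' (2*z-1) ≤ leftIter α β p₁ p₂ k ω' (X k ω') :=
          leftIter_mono (p₁ := p₁) (p₂ := p₂) hα hαβ k ω' _ _ (hzpos z hz) (hmem z hz).2
        _ = 1 := leftIter_X_top hα hαβ hX k ω' 
  -- main two-point bound for ordered pairs
  have key : ∀ a ∈ s, ∀ b ∈ s, a ≤ b →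
      |Real.log (deriv (randIter α β p₁ p₂ (k+1) ω) a) -
          Real.log (deriv (randIter α β p₁ p₂ (k+1) ω) b)| ≤
        C * |randIter α β p₁ p₂ (k+1) ω a - randIter α β p₁ p₂ (k+1) ω b| ∧
      C * |randIter α β p₁ p₂ (k+1) ω a - randIter α β p₁ p₂ (k+1) ω b| ≤ C := by
    intro a ha b hb hab
    set u := 2*a - 1 with hudef
    set v := 2*b - 1 with hvdef
    have huv : u ≤ v := by rw [hudef, hvdef]; linarith
    have hu0 : 0 < u := hzpos a ha
    have hu1 : X (k+1) ω' ≤ u := (hmem a ha).1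
    have hv2 : v ≤ X k ω' := (hmem b hb).2
    set Du := derivProd α β p₁ p₂ k ω' u with hDu
    set Dv := derivProd α β p₁ p₂ k ω' v with hDv
    have hDu1 : 1 ≤ Du := hD1 a ha
    have hDv1 : 1 ≤ Dv := hD1 b hb
    have hDuv : Du ≤ Dv := derivProd_mono (p₁ := p₁) (p₂ := p₂) hα hαβ k ω' u v hu0 huv
    set Gu := leftIter α β p₁ p₂ k ω' u with hGu
    set Gv := leftIter α β p₁ p₂ k ω' v with hGv
    have hGuv : Gu ≤ Gv := leftIter_mono (p₁ := p₁) (p₂ := p₂) hα hαβ k ω' u v hu0 huv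
    have hlog : Real.log Dv - Real.log Du
        ≤ C * ((1 - (X k ω' - X (k+1) ω') / X (k+1) ω') * (Gv - Gu)) :=
      main_dist hα hαβ hβ hX k ω' u v hu1 huv hv2
    have hratio : 0 ≤ (X k ω' - X (k+1) ω') / X (k+1) ω' :=
      div_nonneg (by linarith [X_lt hα hαβ hX k ω']) (X_pos hX (k+1) ω').le
    have hΔ0 : 0 ≤ Gv - Gu := by linarith
    have hfac : (1 - (X k ω' - X (k+1) ω') / X (k+1) ω') * (Gv - Gu) ≤ Gv - Gu := by
      nlinarith
    have hlog2 : Real.log Dv - Real.log Du ≤ C * (Gv - Gu) := by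
      have := mul_le_mul_of_nonneg_left hfac hCpos.le
      linarith
    -- rewrite everything
    have hda : deriv (randIter α β p₁ p₂ (k+1) ω) a = Du * 2 := hderiv_eq a ha
    have hdb : deriv (randIter α β p₁ p₂ (k+1) ω) b = Dv * 2 := hderiv_eq b hb
    have hfa : randIter α β p₁ p₂ (k+1) ω a = Gu := heqfun a ha
    have hfb : randIter α β p₁ p₂ (k+1) ω b = Gv := heqfun b hb
    have hlogmul_u : Real.log (Du * 2) = Real.log Du + Real.log 2 :=
      Real.log_mul (by linarith) (by norm_num)
    have hlogmul_v : Real.log (Dv * 2) = Real.log Dv + Real.log 2 :=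
      Real.log_mul (by linarith) (by norm_num)
    have hlogmono : Real.log Du ≤ Real.log Dv := Real.log_le_log (by linarith) hDuv
    have habs1 : |Real.log (deriv (randIter α β p₁ p₂ (k+1) ω) a) -
        Real.log (deriv (randIter α β p₁ p₂ (k+1) ω) b)|
          = Real.log Dv - Real.log Du := by
      rw [hda, hdb, hlogmul_u, hlogmul_v, abs_sub_comm]
      rw [abs_of_nonneg (by linarith)]
      ring
    have habs2 : |randIter α β p₁ p₂ (k+1) ω a - randIter α β p₁ p₂ (k+1) ω b|
        = Gv - Gu := by
      rw [hfa, hfb, abs_sub_comm, abs_of_nonneg (by linarith)]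
    constructor
    · rw [habs1, habs2]
      exact hlog2
    · rw [habs2]
      have hGub : Gv - Gu ≤ 1 := by
        have h1 := (hval a ha).1
        have h2 := (hval b hb).2
        rw [← hGu] at h1
        rw [← hGv] at h2
        linarith
      calc C * (Gv - Gu) ≤ C * 1 := mul_le_mul_of_nonneg_left hGub hCpos.le
        _ = C := mul_one C
  refine ⟨(hder x hx).differentiableAt, (hder y hy).differentiableAt, ?_, ?_, ?_, ?_⟩
  · rw [hderiv_eq x hx]
    have := hD1 x hx
    linarith
  · rw [hderiv_eq y hy]
    have := hD1 y hy
    linarith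
  · rcases le_total x y with h | h
    · exact (key x hx y hy h).1
    · have hk := (key y hy x hx h).1
      rwa [abs_sub_comm, abs_sub_comm (randIter α β p₁ p₂ (k+1) ω y)] at hk
  · rcases le_total x y with h | h
    · exact (key x hx y hy h).2
    · have hk := (key y hy x hx h).2
      rwa [abs_sub_comm (randIter α β p₁ p₂ (k+1) ω y)] at hk
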